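/- The Bernoulli(ρ) product measure is invariant for the kinetically constrained generator: for every local f : {0,1}^ℤ → ℝ, ∫ (L_n^m f)(η) ν_ρ(dη) = 0, where L_n^m f(η) = Σ_{|x−y|=1} c^m_{x,y}(η) p(y−x) η(x)(1−η(y)) (f(η^{x,y}) − f(η)). -/

import Mathlib

open MeasureTheory

/-- Exchange of the occupation values at sites `a` and `b`. -/
def swapSites (η : ℤ → Bool) (a b : ℤ) : ℤ → Bool := fun w =>
  if w = a then η b else if w = b then η a else η w

/-- Real-valued occupation variable. -/
def occ (η : ℤ → Bool) (z : ℤ) : ℝ := if η z then 1 else 0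

/-- The kinetic constraint
`c^m_{x,x+1}(η) = Σ_{k=1}^m ∏_{j=-(m-k), j∉{0,1}}^{k} η(x+j)`. -/
noncomputable def constraintC (m : ℕ) (x : ℤ) (η : ℤ → Bool) : ℝ :=
  ∑ k ∈ Finset.Icc 1 m,
    ∏ j ∈ (Finset.Icc ((k:ℤ) - (m:ℤ)) (k:ℤ)).filter (fun j => j ≠ 0 ∧ j ≠ 1),
      occ η (x + j)

/-- The generator of the kinetically constrained exclusion process, with
`p(1) = 1/2 + b/(2n^γ)`, `p(-1) = 1/2 - b/(2n^γ)`. -/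
noncomputable def generator (m : ℕ) (b γ : ℝ) (n : ℕ)
    (f : (ℤ → Bool) → ℝ) (η : ℤ → Bool) : ℝ :=
  ∑' x : ℤ,
    (constraintC m x η * (1 / 2 + b / (2 * (n:ℝ) ^ γ)) * occ η x * (1 - occ η (x + 1))
        * (f (swapSites η x (x + 1)) - f η)
      + constraintC m x η * (1 / 2 - b / (2 * (n:ℝ) ^ γ)) * occ η (x + 1) * (1 - occ η x)
        * (f (swapSites η (x + 1) x) - f η))

namespace KCM


noncomputable def bern (ρ : ℝ) (v : Bool) : ℝ := if v then ρ else 1 - ρ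

noncomputable def extF (F : Finset ℤ) (a : {z // z ∈ F} → Bool) : ℤ → Bool :=
  fun z => if h : z ∈ F then a ⟨z, h⟩ else false

noncomputable def EE (ρ : ℝ) (F : Finset ℤ) (g : (ℤ → Bool) → ℝ) : ℝ :=
  ∑ a : ({z // z ∈ F} → Bool), (∏ w, bern ρ (a w)) * g (extF F a)

lemma extF_mem (F : Finset ℤ) (a : {z // z ∈ F} → Bool) {z : ℤ} (hz : z ∈ F) :
    extF F a z = a ⟨z, hz⟩ := by simp [extF, hz]

lemma measurable_cyl (F : Finset ℤ) (c : ℤ → Bool) :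
    MeasurableSet {η : ℤ → Bool | ∀ z ∈ F, η z = c z} := by
  have : {η : ℤ → Bool | ∀ z ∈ F, η z = c z}
      = ⋂ z ∈ (F : Set ℤ), (fun η : ℤ → Bool => η z) ⁻¹' {c z} := by
    ext η; simp
  rw [this]
  exact MeasurableSet.biInter F.countable_toSet
    (fun z _ => (measurable_pi_apply z) (measurableSet_singleton _))

lemma integral_eq_EE {ρ : ℝ} (hρ0 : 0 ≤ ρ) (hρ1 : ρ ≤ 1)
    (μ : Measure (ℤ → Bool)) [IsProbabilityMeasure μ]
    (hiid : ∀ (S : Finset ℤ) (c : ℤ → Bool), μ {η | ∀ z ∈ S, η z = c z}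
        = ∏ z ∈ S, ENNReal.ofReal (if c z then ρ else 1 - ρ))
    (F : Finset ℤ) (g : (ℤ → Bool) → ℝ)
    (hg : ∀ η η', (∀ z ∈ F, η z = η' z) → g η = g η') :
    ∫ η, g η ∂μ = EE ρ F g := by
  have hpt : ∀ η, g η = ∑ a : ({z // z ∈ F} → Bool),
      Set.indicator {η' | ∀ z ∈ F, η' z = extF F a z} (fun _ => g (extF F a)) η := by
    intro η
    set a₀ : {z // z ∈ F} → Bool := fun w => η w.1 with ha₀
    rw [Finset.sum_eq_single_of_mem a₀ (Finset.mem_univ _)]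
    · have hmem : η ∈ {η' | ∀ z ∈ F, η' z = extF F a₀ z} := by
        intro z hz; rw [extF_mem F a₀ hz]
      rw [Set.indicator_of_mem hmem]
      exact hg _ _ (fun z hz => by rw [extF_mem F a₀ hz])
    · intro a _ hne
      apply Set.indicator_of_notMem
      intro hmem
      apply hne
      funext w
      have := hmem w.1 w.2
      rw [extF_mem F a w.2] at this
      simp [a₀, this]
  calc ∫ η, g η ∂μ
      = ∫ η, (∑ a : ({z // z ∈ F} → Bool),
          Set.indicator {η' | ∀ z ∈ F, η' z = extF F a z} (fun _ => g (extF F a)) η) ∂μ := by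
        congr 1; funext η; exact hpt η
    _ = ∑ a : ({z // z ∈ F} → Bool),
          ∫ η, Set.indicator {η' | ∀ z ∈ F, η' z = extF F a z} (fun _ => g (extF F a)) η ∂μ := by
        apply integral_finset_sum
        intro a _
        exact (integrable_const _).indicator (measurable_cyl F (extF F a))
    _ = ∑ a : ({z // z ∈ F} → Bool), (∏ w, bern ρ (a w)) * g (extF F a) := by
        apply Finset.sum_congr rfl
        intro a _
        rw [integral_indicator_const _ (measurable_cyl F (extF F a)), measureReal_def, hiid F (extF F a)]
        rw [smul_eq_mul]
        congr 1
        rw [ENNReal.toReal_prod]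
        have : ∀ z ∈ F, (ENNReal.ofReal (if extF F a z then ρ else 1 - ρ)).toReal
            = bern ρ (extF F a z) := by
          intro z hz
          rw [ENNReal.toReal_ofReal]
          · rfl
          · by_cases h : extF F a z <;> simp [h] <;> linarith
        rw [Finset.prod_congr rfl this]
        rw [Finset.univ_eq_attach]
        rw [← Finset.prod_attach F (fun z => bern ρ (extF F a z))]
        apply Finset.prod_congr rfl
        intro w _
        rw [extF_mem F a w.2]
    _ = EE ρ F g := rfl

lemma EE_swap (ρ : ℝ) (F : Finset ℤ) {x y : ℤ} (hx : x ∈ F) (hy : y ∈ F) (hxy : x ≠ y)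
    (g : (ℤ → Bool) → ℝ) :
    EE ρ F (fun η => g (swapSites η x y)) = EE ρ F g := by
  classical
  set σ : {z // z ∈ F} ≃ {z // z ∈ F} := Equiv.swap ⟨x, hx⟩ ⟨y, hy⟩ with hσ
  have key : ∀ a : {z // z ∈ F} → Bool, swapSites (extF F a) x y = extF F (a ∘ σ) := by
    intro a; funext z
    by_cases hzx : z = x
    · subst hzx
      simp only [swapSites, if_pos rfl, extF_mem F a hy, extF_mem F _ hx]
      simp [σ]
    · by_cases hzy : z = y
      · subst hzy
        simp only [swapSites, if_neg hzx, if_pos rfl, extF_mem F a hx, extF_mem F _ hy]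
        simp [σ]
      · simp only [swapSites, if_neg hzx, if_neg hzy]
        by_cases hz : z ∈ F
        · rw [extF_mem F a hz, extF_mem F _ hz]
          have h1 : (⟨z, hz⟩ : {z // z ∈ F}) ≠ ⟨x, hx⟩ := fun h => hzx (congrArg Subtype.val h)
          have h2 : (⟨z, hz⟩ : {z // z ∈ F}) ≠ ⟨y, hy⟩ := fun h => hzy (congrArg Subtype.val h)
          simp [σ, Equiv.swap_apply_of_ne_of_ne h1 h2]
        · simp [extF, hz]
  set A : ({z // z ∈ F} → Bool) ≃ ({z // z ∈ F} → Bool) :=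
    Equiv.arrowCongr σ.symm (Equiv.refl Bool) with hA
  have hAa : ∀ a, A a = a ∘ σ := by
    intro a; funext w; simp [A, Equiv.arrowCongr]
  have := Equiv.sum_comp A (fun a : {z // z ∈ F} → Bool => (∏ w, bern ρ (a w)) * g (extF F a))
  rw [EE, EE, ← this]
  apply Finset.sum_congr rfl
  intro a _
  rw [hAa a, key a]
  congr 1
  exact (σ.prod_comp (fun w => bern ρ (a w))).symm

lemma EE_peel (ρ : ℝ) (F : Finset ℤ) {z : ℤ} (hz : z ∈ F) (g : (ℤ → Bool) → ℝ)
    (hg : ∀ η η', (∀ w, w ≠ z → η w = η' w) → g η = g η') :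
    EE ρ F (fun η => occ η z * g η) = ρ * EE ρ F g := by
  classical
  set ζ : {w // w ∈ F} := ⟨z, hz⟩ with hζ
  set e := Equiv.funSplitAt ζ Bool with he
  have hval : ∀ (v : Bool) (r : {j // j ≠ ζ} → Bool), (e.symm (v, r)) ζ = v := by
    intro v r; simp [e, Equiv.funSplitAt, Equiv.piSplitAt]
  have hoth : ∀ (v : Bool) (r : {j // j ≠ ζ} → Bool) (w : {w // w ∈ F}) (hw : w ≠ ζ),
      (e.symm (v, r)) w = r ⟨w, hw⟩ := by
    intro v r w hw; simp [e, Equiv.funSplitAt, Equiv.piSplitAt, hw]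
  have hwt : ∀ (v : Bool) (r : {j // j ≠ ζ} → Bool),
      (∏ w, bern ρ ((e.symm (v, r)) w)) = bern ρ v * ∏ j : {j // j ≠ ζ}, bern ρ (r j) := by
    intro v r
    rw [← Finset.mul_prod_erase Finset.univ _ (Finset.mem_univ ζ)]
    congr 1
    · rw [hval]
    · rw [Finset.prod_subtype (Finset.univ.erase ζ)
        (p := fun j => j ≠ ζ) (fun j => by simp) (fun w => bern ρ ((e.symm (v,r)) w))]
      apply Finset.prod_congr rfl
      intro j _
      rw [hoth v r j.1 j.2]
  have hgval : ∀ (v : Bool) (r : {j // j ≠ ζ} → Bool),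
      g (extF F (e.symm (v, r))) = g (extF F (e.symm (true, r))) := by
    intro v r
    apply hg
    intro w hw
    by_cases hwF : w ∈ F
    · rw [extF_mem F _ hwF, extF_mem F _ hwF]
      have hne : (⟨w, hwF⟩ : {w // w ∈ F}) ≠ ζ := fun h => hw (congrArg Subtype.val h)
      rw [hoth v _ _ hne, hoth true _ _ hne]
    · simp [extF, hwF]
  have hocc : ∀ (v : Bool) (r : {j // j ≠ ζ} → Bool),
      occ (extF F (e.symm (v, r))) z = if v then 1 else 0 := by
    intro v r
    rw [occ, extF_mem F _ hz, ← hζ, hval]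
  have expand : ∀ (h : ({w // w ∈ F} → Bool) → ℝ),
      ∑ a, h a = ∑ v : Bool, ∑ r : {j // j ≠ ζ} → Bool, h (e.symm (v, r)) := by
    intro h
    rw [← Equiv.sum_comp e.symm h, Fintype.sum_prod_type]
  rw [EE, EE, expand, expand]
  simp only [hwt, hgval, hocc]
  rw [Finset.sum_comm]
  conv_rhs => rw [Finset.sum_comm]
  rw [Finset.mul_sum]
  apply Finset.sum_congr rfl
  intro r _
  rw [Fintype.sum_bool, Fintype.sum_bool]
  simp only [bern, Bool.false_eq_true, if_false, if_true]
  ring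

lemma EE_congr (ρ : ℝ) (F : Finset ℤ) {g h : (ℤ → Bool) → ℝ} (hgh : ∀ η, g η = h η) :
    EE ρ F g = EE ρ F h := by
  unfold EE; exact Finset.sum_congr rfl (fun a _ => by rw [hgh])

lemma EE_sites (ρ : ℝ) (F : Finset ℤ) (K : Finset ℤ) (hK : K ⊆ F) (g : (ℤ → Bool) → ℝ)
    (hg : ∀ η η', (∀ w, w ∉ K → η w = η' w) → g η = g η') :
    EE ρ F (fun η => (∏ w ∈ K, occ η w) * g η) = ρ ^ K.card * EE ρ F g := by
  classical
  induction K using Finset.induction_on with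
  | empty =>
    simp only [Finset.prod_empty, one_mul, Finset.card_empty, pow_zero]
  | @insert z K hzK ih =>
    have hzF : z ∈ F := hK (Finset.mem_insert_self z K)
    have hKF : K ⊆ F := fun w hw => hK (Finset.mem_insert_of_mem hw)
    have step1 : EE ρ F (fun η => (∏ w ∈ insert z K, occ η w) * g η)
        = EE ρ F (fun η => occ η z * ((∏ w ∈ K, occ η w) * g η)) := by
      apply EE_congr
      intro η
      rw [Finset.prod_insert hzK, mul_assoc]
    rw [step1, EE_peel ρ F hzF _ ?_, ih hKF ?_]
    · rw [Finset.card_insert_of_notMem hzK, pow_succ]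
      ring
    · intro η η' hagree
      exact hg η η' (fun w hw => hagree w (fun h => hw (Finset.mem_insert_of_mem h)))
    · intro η η' hagree
      have h1 : (∏ w ∈ K, occ η w) = ∏ w ∈ K, occ η' w := by
        apply Finset.prod_congr rfl
        intro w hw
        rw [occ, occ, hagree w (fun h => hzK (h ▸ hw))]
      have h2 : g η = g η' :=
        hg η η' (fun w hw => hagree w (fun h => hw (h ▸ Finset.mem_insert_self z K)))
      rw [h1, h2]

lemma EE_sum (ρ : ℝ) (F : Finset ℤ) {ι : Type*} (s : Finset ι) (h : ι → (ℤ → Bool) → ℝ) :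
    EE ρ F (fun η => ∑ i ∈ s, h i η) = ∑ i ∈ s, EE ρ F (h i) := by
  unfold EE
  rw [Finset.sum_comm]
  apply Finset.sum_congr rfl
  intro a _
  rw [Finset.mul_sum]

lemma EE_comb (ρ : ℝ) (F : Finset ℤ) (c₁ c₂ : ℝ) (u v w t : (ℤ → Bool) → ℝ) :
    EE ρ F (fun η => c₁ * u η - c₁ * v η + (c₂ * w η - c₂ * t η))
      = c₁ * EE ρ F u - c₁ * EE ρ F v + (c₂ * EE ρ F w - c₂ * EE ρ F t) := by
  unfold EE
  rw [Finset.mul_sum, Finset.mul_sum, Finset.mul_sum, Finset.mul_sum,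
    ← Finset.sum_sub_distrib, ← Finset.sum_sub_distrib, ← Finset.sum_add_distrib]
  exact Finset.sum_congr rfl (fun a _ => by ring)

lemma EE_sub (ρ : ℝ) (F : Finset ℤ) (u v : (ℤ → Bool) → ℝ) :
    EE ρ F (fun η => u η - v η) = EE ρ F u - EE ρ F v := by
  unfold EE
  rw [← Finset.sum_sub_distrib]
  exact Finset.sum_congr rfl (fun a _ => by ring)



noncomputable def siteProd (W : Finset ℤ) (η : ℤ → Bool) : ℝ := ∏ w ∈ W, occ η w

noncomputable def Rset (m : ℕ) (x : ℤ) (k : ℕ) : Finset ℤ :=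
  Finset.Icc (x + k - m) x ∪ Finset.Icc (x + 2) (x + k)

noncomputable def Qset (m : ℕ) (x : ℤ) (k : ℕ) : Finset ℤ :=
  Finset.Icc (x + k - m) (x - 1) ∪ Finset.Icc (x + 1) (x + k)

lemma shift_prod (x c d : ℤ) (η : ℤ → Bool) :
    (∏ j ∈ Finset.Icc c d, occ η (x + j)) = ∏ w ∈ Finset.Icc (x + c) (x + d), occ η w := by
  rw [show Finset.Icc (x + c) (x + d) = Finset.Icc (c + x) (d + x) by rw [add_comm c x, add_comm d x]]
  rw [← Finset.map_add_right_Icc c d x, Finset.prod_map]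
  apply Finset.prod_congr rfl
  intro j _
  simp [addRightEmbedding, add_comm]

lemma cR (m : ℕ) (hm : 1 ≤ m) (x : ℤ) (η : ℤ → Bool) :
    constraintC m x η * occ η x = ∑ k ∈ Finset.Icc 1 m, siteProd (Rset m x k) η := by
  rw [constraintC, Finset.sum_mul]
  apply Finset.sum_congr rfl
  intro k hk
  rw [Finset.mem_Icc] at hk
  have hk1 : (1:ℤ) ≤ (k:ℤ) := by exact_mod_cast hk.1
  have hkm : (k:ℤ) ≤ (m:ℤ) := by exact_mod_cast hk.2
  have hfil : (Finset.Icc ((k:ℤ) - m) (k:ℤ)).filter (fun j => j ≠ 0 ∧ j ≠ 1)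
      = Finset.Icc ((k:ℤ) - m) (-1) ∪ Finset.Icc 2 (k:ℤ) := by
    ext j
    simp only [Finset.mem_filter, Finset.mem_Icc, Finset.mem_union]
    omega
  have hdis : Disjoint (Finset.Icc ((k:ℤ) - m) (-1)) (Finset.Icc 2 (k:ℤ)) := by
    rw [Finset.disjoint_left]
    intro j hj hj'
    rw [Finset.mem_Icc] at hj hj'
    omega
  rw [hfil, Finset.prod_union hdis]
  have hins : Finset.Icc ((k:ℤ) - m) 0 = insert 0 (Finset.Icc ((k:ℤ) - m) (-1)) := by
    ext j
    simp only [Finset.mem_insert, Finset.mem_Icc]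
    omega
  have h0 : (0:ℤ) ∉ Finset.Icc ((k:ℤ) - m) (-1) := by
    simp only [Finset.mem_Icc]; omega
  have key : (∏ j ∈ Finset.Icc ((k:ℤ) - m) (-1), occ η (x + j)) * occ η x
      = ∏ j ∈ Finset.Icc ((k:ℤ) - m) 0, occ η (x + j) := by
    rw [hins, Finset.prod_insert h0, add_zero]
    ring
  rw [show (∏ j ∈ Finset.Icc ((k:ℤ)-m) (-1), occ η (x+j)) * (∏ j ∈ Finset.Icc 2 (k:ℤ), occ η (x+j)) * occ η x
      = ((∏ j ∈ Finset.Icc ((k:ℤ)-m) (-1), occ η (x+j)) * occ η x) * (∏ j ∈ Finset.Icc 2 (k:ℤ), occ η (x+j)) from by ring]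
  rw [key, shift_prod, shift_prod, siteProd, Rset]
  rw [show x + ((k:ℤ) - m) = x + k - m from by ring, show x + (0:ℤ) = x from by ring]
  have hdis2 : Disjoint (Finset.Icc (x + (k:ℤ) - m) x) (Finset.Icc (x + 2) (x + k)) := by
    rw [Finset.disjoint_left]
    intro j hj hj'
    rw [Finset.mem_Icc] at hj hj'
    omega
  rw [Finset.prod_union hdis2]

lemma cQ (m : ℕ) (hm : 1 ≤ m) (x : ℤ) (η : ℤ → Bool) :
    constraintC m x η * occ η (x + 1) = ∑ k ∈ Finset.Icc 1 m, siteProd (Qset m x k) η := by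
  rw [constraintC, Finset.sum_mul]
  apply Finset.sum_congr rfl
  intro k hk
  rw [Finset.mem_Icc] at hk
  have hk1 : (1:ℤ) ≤ (k:ℤ) := by exact_mod_cast hk.1
  have hkm : (k:ℤ) ≤ (m:ℤ) := by exact_mod_cast hk.2
  have hfil : (Finset.Icc ((k:ℤ) - m) (k:ℤ)).filter (fun j => j ≠ 0 ∧ j ≠ 1)
      = Finset.Icc ((k:ℤ) - m) (-1) ∪ Finset.Icc 2 (k:ℤ) := by
    ext j
    simp only [Finset.mem_filter, Finset.mem_Icc, Finset.mem_union]
    omega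
  have hdis : Disjoint (Finset.Icc ((k:ℤ) - m) (-1)) (Finset.Icc 2 (k:ℤ)) := by
    rw [Finset.disjoint_left]
    intro j hj hj'
    rw [Finset.mem_Icc] at hj hj'
    omega
  rw [hfil, Finset.prod_union hdis]
  have hins : Finset.Icc (1:ℤ) (k:ℤ) = insert 1 (Finset.Icc 2 (k:ℤ)) := by
    ext j
    simp only [Finset.mem_insert, Finset.mem_Icc]
    omega
  have h1 : (1:ℤ) ∉ Finset.Icc (2:ℤ) (k:ℤ) := by
    simp only [Finset.mem_Icc]; omega
  have key : (∏ j ∈ Finset.Icc (2:ℤ) (k:ℤ), occ η (x + j)) * occ η (x + 1)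
      = ∏ j ∈ Finset.Icc (1:ℤ) (k:ℤ), occ η (x + j) := by
    rw [hins, Finset.prod_insert h1]
    ring
  rw [mul_assoc, key, shift_prod, shift_prod, siteProd, Qset]
  rw [show x + ((k:ℤ) - m) = x + k - m from by ring, show x + (-1:ℤ) = x - 1 from by ring]
  have hdis2 : Disjoint (Finset.Icc (x + (k:ℤ) - m) (x - 1)) (Finset.Icc (x + 1) (x + k)) := by
    rw [Finset.disjoint_left]
    intro j hj hj'
    rw [Finset.mem_Icc] at hj hj'
    omega
  rw [Finset.prod_union hdis2]

lemma Qset_eq_Rset (m : ℕ) (x : ℤ) (k : ℕ) (hk : 1 ≤ k) (hk' : k + 1 ≤ m) :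
    Qset m x k = Rset m (x - 1) (k + 1) := by
  ext w
  simp only [Qset, Rset, Finset.mem_union, Finset.mem_Icc]
  push_cast
  omega

lemma Qset_top (m : ℕ) (hm : 1 ≤ m) (x : ℤ) :
    Qset m x m = Rset m (x + m) 1 := by
  ext w
  simp only [Qset, Rset, Finset.mem_union, Finset.mem_Icc]
  push_cast
  omega

lemma Rset_card (m : ℕ) (x : ℤ) (k : ℕ) (hk : 1 ≤ k) (hk' : k ≤ m) :
    (Rset m x k).card = m := by
  unfold Rset
  have hdis : Disjoint (Finset.Icc (x + (k:ℤ) - m) x) (Finset.Icc (x + 2) (x + k)) := by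
    rw [Finset.disjoint_left]
    intro j hj hj'
    rw [Finset.mem_Icc] at hj hj'
    omega
  rw [Finset.card_union_of_disjoint hdis, Int.card_Icc, Int.card_Icc]
  have h1 : (1:ℤ) ≤ (k:ℤ) := by exact_mod_cast hk
  have h2 : (k:ℤ) ≤ (m:ℤ) := by exact_mod_cast hk'
  omega

lemma Rset_subset (m : ℕ) (x : ℤ) (k : ℕ) (hk : 1 ≤ k) (hk' : k ≤ m) :
    Rset m x k ⊆ Finset.Icc (x + 1 - m) (x + m) := by
  intro w hw
  have h1 : (1:ℤ) ≤ (k:ℤ) := by exact_mod_cast hk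
  have h2 : (k:ℤ) ≤ (m:ℤ) := by exact_mod_cast hk'
  simp only [Rset, Finset.mem_union, Finset.mem_Icc] at hw
  simp only [Finset.mem_Icc]
  omega

lemma swapSites_comm (η : ℤ → Bool) (a b : ℤ) : swapSites η a b = swapSites η b a := by
  funext w
  unfold swapSites
  by_cases h1 : w = a
  · by_cases h2 : w = b
    · have hab : a = b := h1.symm.trans h2
      simp [h1, h2, hab]
    · simp [h1, h2, show a ≠ b from fun h => h2 (h1.trans h)]
  · by_cases h2 : w = b
    · simp only [if_neg h1, if_pos h2]
    · simp [h1, h2]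

lemma occ_swap_left (η : ℤ → Bool) (a b : ℤ) : occ (swapSites η a b) a = occ η b := by
  simp [occ, swapSites]

lemma occ_swap_right (η : ℤ → Bool) (a b : ℤ) : occ (swapSites η a b) b = occ η a := by
  by_cases h : b = a
  · subst h; simp [occ, swapSites]
  · simp [occ, swapSites, h]

lemma constraintC_swap (m : ℕ) (x : ℤ) (η : ℤ → Bool) :
    constraintC m x (swapSites η x (x + 1)) = constraintC m x η := by
  unfold constraintC
  apply Finset.sum_congr rfl
  intro k _
  apply Finset.prod_congr rfl
  intro j hj
  rw [Finset.mem_filter] at hj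
  have hj0 : j ≠ 0 := hj.2.1
  have hj1 : j ≠ 1 := hj.2.2
  have h1 : x + j ≠ x := by omega
  have h2 : x + j ≠ x + 1 := by omega
  simp [occ, swapSites, h1, h2]

lemma constraintC_local (m : ℕ) (x : ℤ) (η η' : ℤ → Bool)
    (h : ∀ z ∈ Finset.Icc (x + 1 - m) (x + m), η z = η' z) :
    constraintC m x η = constraintC m x η' := by
  unfold constraintC
  apply Finset.sum_congr rfl
  intro k hk
  rw [Finset.mem_Icc] at hk
  have hk1 : (1:ℤ) ≤ (k:ℤ) := by exact_mod_cast hk.1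
  have hkm : (k:ℤ) ≤ (m:ℤ) := by exact_mod_cast hk.2
  apply Finset.prod_congr rfl
  intro j hj
  rw [Finset.mem_filter, Finset.mem_Icc] at hj
  rw [occ, occ, h (x + j) (by rw [Finset.mem_Icc]; omega)]



lemma telescope (m : ℕ) (hm : 2 ≤ m) (aL bR : ℤ) (hab : aL + m ≤ bR + 1)
    (ψ : ℤ → ℕ → ℝ) (c₀ : ℝ)
    (hb1 : ∀ k ∈ Finset.Icc 2 m, ψ (aL - 1) k = c₀)
    (hb2 : ∀ k ∈ Finset.Icc 2 m, ψ bR k = c₀)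
    (hb3 : ∀ y ∈ Finset.Icc (bR + 1) (bR + m), ψ y 1 = c₀)
    (hb4 : ∀ y ∈ Finset.Icc aL (aL + m - 1), ψ y 1 = c₀) :
    ∑ x ∈ Finset.Icc aL bR,
      ((∑ k ∈ Finset.Icc 2 m, ψ (x - 1) k + ψ (x + m) 1)
        - (∑ k ∈ Finset.Icc 2 m, ψ x k + ψ x 1)) = 0 := by
  have hmZ : (2:ℤ) ≤ (m:ℤ) := by exact_mod_cast hm
  have split : ∀ x : ℤ, ((∑ k ∈ Finset.Icc 2 m, ψ (x - 1) k + ψ (x + m) 1)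
        - (∑ k ∈ Finset.Icc 2 m, ψ x k + ψ x 1))
      = ((∑ k ∈ Finset.Icc 2 m, ψ (x - 1) k) - ∑ k ∈ Finset.Icc 2 m, ψ x k)
        + (ψ (x + m) 1 - ψ x 1) := by intro x; ring
  rw [Finset.sum_congr rfl (fun x _ => split x), Finset.sum_add_distrib,
    Finset.sum_sub_distrib, Finset.sum_sub_distrib]
  have part1 : (∑ x ∈ Finset.Icc aL bR, ∑ k ∈ Finset.Icc 2 m, ψ (x - 1) k)
      - (∑ x ∈ Finset.Icc aL bR, ∑ k ∈ Finset.Icc 2 m, ψ x k) = 0 := by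
    have hmap : (Finset.Icc (aL - 1) (bR - 1)).map (addRightEmbedding 1) = Finset.Icc aL bR := by
      rw [Finset.map_add_right_Icc]
      congr 1 <;> omega
    have h1 : ∑ x ∈ Finset.Icc aL bR, ∑ k ∈ Finset.Icc 2 m, ψ (x - 1) k
        = ∑ x ∈ Finset.Icc (aL - 1) (bR - 1), ∑ k ∈ Finset.Icc 2 m, ψ x k := by
      rw [← hmap, Finset.sum_map]
      apply Finset.sum_congr rfl
      intro x _
      have : (addRightEmbedding (1:ℤ)) x - 1 = x := by
        simp [addRightEmbedding]
      rw [this]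
    rw [h1]
    have e1 : Finset.Icc (aL - 1) (bR - 1) = insert (aL - 1) (Finset.Icc aL (bR - 1)) := by
      ext w; simp only [Finset.mem_insert, Finset.mem_Icc]; omega
    have e2 : Finset.Icc aL bR = insert bR (Finset.Icc aL (bR - 1)) := by
      ext w; simp only [Finset.mem_insert, Finset.mem_Icc]; omega
    have n1 : aL - 1 ∉ Finset.Icc aL (bR - 1) := by simp only [Finset.mem_Icc]; omega
    have n2 : bR ∉ Finset.Icc aL (bR - 1) := by simp only [Finset.mem_Icc]; omega
    rw [e1, e2, Finset.sum_insert n1, Finset.sum_insert n2]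
    have v1 : ∑ k ∈ Finset.Icc 2 m, ψ (aL - 1) k = (Finset.Icc 2 m).card • c₀ := by
      rw [Finset.sum_congr rfl hb1, Finset.sum_const]
    have v2 : ∑ k ∈ Finset.Icc 2 m, ψ bR k = (Finset.Icc 2 m).card • c₀ := by
      rw [Finset.sum_congr rfl hb2, Finset.sum_const]
    rw [v1, v2]
    ring
  have part2 : (∑ x ∈ Finset.Icc aL bR, ψ (x + m) 1)
      - (∑ x ∈ Finset.Icc aL bR, ψ x 1) = 0 := by
    have hmap : (Finset.Icc aL bR).map (addRightEmbedding (m:ℤ)) = Finset.Icc (aL + m) (bR + m) := by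
      rw [Finset.map_add_right_Icc]
    have h1 : ∑ x ∈ Finset.Icc aL bR, ψ (x + m) 1
        = ∑ y ∈ Finset.Icc (aL + m) (bR + m), ψ y 1 := by
      rw [← hmap, Finset.sum_map]
      rfl
    rw [h1]
    have e1 : Finset.Icc (aL + m) (bR + m) = Finset.Icc (aL + m) bR ∪ Finset.Icc (bR + 1) (bR + m) := by
      ext w; simp only [Finset.mem_union, Finset.mem_Icc]; omega
    have e2 : Finset.Icc aL bR = Finset.Icc aL (aL + m - 1) ∪ Finset.Icc (aL + m) bR := by
      ext w; simp only [Finset.mem_union, Finset.mem_Icc]; omega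
    have d1 : Disjoint (Finset.Icc (aL + m) bR) (Finset.Icc (bR + 1) (bR + m)) := by
      rw [Finset.disjoint_left]; intro w hw hw'
      rw [Finset.mem_Icc] at hw hw'; omega
    have d2 : Disjoint (Finset.Icc aL (aL + m - 1)) (Finset.Icc (aL + m) bR) := by
      rw [Finset.disjoint_left]; intro w hw hw'
      rw [Finset.mem_Icc] at hw hw'; omega
    rw [e1, e2, Finset.sum_union d1, Finset.sum_union d2]
    have v3 : ∑ y ∈ Finset.Icc (bR + 1) (bR + m), ψ y 1
        = (Finset.Icc (bR + 1) (bR + m)).card • c₀ := by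
      rw [Finset.sum_congr rfl hb3, Finset.sum_const]
    have v4 : ∑ y ∈ Finset.Icc aL (aL + m - 1), ψ y 1
        = (Finset.Icc aL (aL + m - 1)).card • c₀ := by
      rw [Finset.sum_congr rfl hb4, Finset.sum_const]
    rw [v3, v4]
    have c3 : (Finset.Icc (bR + 1) (bR + m)).card = m := by
      rw [Int.card_Icc]; omega
    have c4 : (Finset.Icc aL (aL + m - 1)).card = m := by
      rw [Int.card_Icc]; omega
    rw [c3, c4]
    ring
  rw [part1] at *
  linarith [part1, part2]


lemma Rset_subset_one (m : ℕ) (hm : 1 ≤ m) (y : ℤ) :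
    Rset m y 1 ⊆ Finset.Icc (y + 1 - m) y := by
  intro w hw
  simp only [Rset, Finset.mem_union, Finset.mem_Icc] at hw ⊢
  push_cast at hw
  omega

noncomputable def gplus (m : ℕ) (x : ℤ) (f : (ℤ → Bool) → ℝ) : (ℤ → Bool) → ℝ :=
  fun η => constraintC m x η * occ η (x + 1) * (1 - occ η x) * f η

noncomputable def gminus (m : ℕ) (x : ℤ) (f : (ℤ → Bool) → ℝ) : (ℤ → Bool) → ℝ :=
  fun η => constraintC m x η * occ η x * (1 - occ η (x + 1)) * f η

noncomputable def psi (ρ : ℝ) (F : Finset ℤ) (m : ℕ) (f : (ℤ → Bool) → ℝ) (y : ℤ) (k : ℕ) : ℝ :=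
  EE ρ F (fun η => siteProd (Rset m y k) η * f η)

lemma EE_term (ρ : ℝ) (F : Finset ℤ) (m : ℕ) (hm : 1 ≤ m) (p q : ℝ)
    (f : (ℤ → Bool) → ℝ) (x : ℤ) (hx : x ∈ F) (hx1 : x + 1 ∈ F) :
    EE ρ F (fun η => constraintC m x η * p * occ η x * (1 - occ η (x + 1))
        * (f (swapSites η x (x + 1)) - f η)
      + constraintC m x η * q * occ η (x + 1) * (1 - occ η x)
        * (f (swapSites η (x + 1) x) - f η))
    = (p - q) * ((∑ k ∈ Finset.Icc 1 m, EE ρ F (fun η => siteProd (Qset m x k) η * f η))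
      - ∑ k ∈ Finset.Icc 1 m, EE ρ F (fun η => siteProd (Rset m x k) η * f η)) := by
  have hxx1 : x ≠ x + 1 := by omega
  have h0T : ∀ η, gplus m x f (swapSites η x (x + 1))
      = constraintC m x η * occ η x * (1 - occ η (x + 1)) * f (swapSites η x (x + 1)) := by
    intro η
    unfold gplus
    rw [constraintC_swap, occ_swap_right, occ_swap_left]
  have h1T : ∀ η, gminus m x f (swapSites η x (x + 1))
      = constraintC m x η * occ η (x + 1) * (1 - occ η x) * f (swapSites η x (x + 1)) := by
    intro η
    unfold gminus
    rw [constraintC_swap, occ_swap_right, occ_swap_left]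
  have hdiff : EE ρ F (gplus m x f) - EE ρ F (gminus m x f)
      = (∑ k ∈ Finset.Icc 1 m, EE ρ F (fun η => siteProd (Qset m x k) η * f η))
        - ∑ k ∈ Finset.Icc 1 m, EE ρ F (fun η => siteProd (Rset m x k) η * f η) := by
    rw [← EE_sum, ← EE_sum, ← EE_sub, ← EE_sub]
    apply EE_congr
    intro η
    have e1 : gplus m x f η - gminus m x f η
        = (constraintC m x η * occ η (x + 1)) * f η - (constraintC m x η * occ η x) * f η := by
      unfold gplus gminus; ring
    rw [e1, cQ m hm x η, cR m hm x η, Finset.sum_mul, Finset.sum_mul]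
  calc EE ρ F (fun η => constraintC m x η * p * occ η x * (1 - occ η (x + 1))
        * (f (swapSites η x (x + 1)) - f η)
      + constraintC m x η * q * occ η (x + 1) * (1 - occ η x)
        * (f (swapSites η (x + 1) x) - f η))
      = EE ρ F (fun η => p * (gplus m x f (swapSites η x (x + 1))) - p * gminus m x f η
          + (q * (gminus m x f (swapSites η x (x + 1))) - q * gplus m x f η)) := by
        apply EE_congr
        intro η
        rw [h0T η, h1T η, swapSites_comm η (x + 1) x]
        unfold gplus gminus
        ring
    _ = p * EE ρ F (fun η => gplus m x f (swapSites η x (x + 1))) - p * EE ρ F (gminus m x f)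
          + (q * EE ρ F (fun η => gminus m x f (swapSites η x (x + 1)))
            - q * EE ρ F (gplus m x f)) :=
        EE_comb ρ F p q _ _ _ _
    _ = p * EE ρ F (gplus m x f) - p * EE ρ F (gminus m x f)
          + (q * EE ρ F (gminus m x f) - q * EE ρ F (gplus m x f)) := by
        rw [EE_swap ρ F hx hx1 hxx1 (gplus m x f), EE_swap ρ F hx hx1 hxx1 (gminus m x f)]
    _ = (p - q) * (EE ρ F (gplus m x f) - EE ρ F (gminus m x f)) := by ring
    _ = (p - q) * ((∑ k ∈ Finset.Icc 1 m, EE ρ F (fun η => siteProd (Qset m x k) η * f η))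
      - ∑ k ∈ Finset.Icc 1 m, EE ρ F (fun η => siteProd (Rset m x k) η * f η)) := by
        rw [hdiff]

end KCM

open KCM in
theorem bernoulli_invariant_for_generator
    (m : ℕ) (hm : 2 ≤ m) (b γ : ℝ) (n : ℕ) (hn : 0 < n)
    (ρ : ℝ) (hρ : ρ ∈ Set.Ioo (0:ℝ) 1)
    (μ : Measure (ℤ → Bool)) [IsProbabilityMeasure μ]
    (hiid : ∀ (S : Finset ℤ) (a : ℤ → Bool),
      μ {η | ∀ z ∈ S, η z = a z}
        = ∏ z ∈ S, ENNReal.ofReal (if a z then ρ else 1 - ρ))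
    (f : (ℤ → Bool) → ℝ) (hmeas : Measurable f)
    (hloc : ∃ S : Finset ℤ, ∀ η η' : ℤ → Bool,
      (∀ z ∈ S, η z = η' z) → f η = f η') :
    ∫ η, generator m b γ n f η ∂μ = 0 := by
  classical
  obtain ⟨S₀, hS₀⟩ := hloc
  set S' : Finset ℤ := insert 0 S₀ with hS'def
  have hS' : ∀ η η' : (ℤ → Bool), (∀ z ∈ S', η z = η' z) → f η = f η' :=
    fun η η' h => hS₀ η η' (fun z hz => h z (Finset.mem_insert_of_mem hz))
  have hne : S'.Nonempty := ⟨0, Finset.mem_insert_self 0 S₀⟩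
  set lo := S'.min' hne with hlo
  set hi := S'.max' hne with hhi
  have hSmem : ∀ z ∈ S', lo ≤ z ∧ z ≤ hi :=
    fun z hz => ⟨Finset.min'_le S' z hz, Finset.le_max' S' z hz⟩
  have hlohi : lo ≤ hi := (hSmem lo (S'.min'_mem hne)).2
  have hmZ : (2:ℤ) ≤ (m:ℤ) := by exact_mod_cast hm
  have hm1 : 1 ≤ m := by omega
  set aL := lo - (m:ℤ) with haL
  set bR := hi + (m:ℤ) with hbR
  set F : Finset ℤ := Finset.Icc (aL - m) (bR + 2 * m) with hFdef
  have hρ0 : (0:ℝ) ≤ ρ := hρ.1.le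
  have hρ1 : ρ ≤ 1 := hρ.2.le
  -- step 1: the generator is a finite sum
  have hgen : ∀ η, generator m b γ n f η = ∑ x ∈ Finset.Icc aL bR,
      (constraintC m x η * (1 / 2 + b / (2 * (n:ℝ) ^ γ)) * occ η x * (1 - occ η (x + 1))
        * (f (swapSites η x (x + 1)) - f η)
      + constraintC m x η * (1 / 2 - b / (2 * (n:ℝ) ^ γ)) * occ η (x + 1) * (1 - occ η x)
        * (f (swapSites η (x + 1) x) - f η)) := by
    intro η
    rw [generator]
    refine tsum_eq_sum ?_
    intro x hx
    rw [Finset.mem_Icc] at hx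
    have hz1 : f (swapSites η x (x + 1)) = f η := by
      apply hS'
      intro z hz
      have hb' := hSmem z hz
      have hzx : z ≠ x := by omega
      have hzx1 : z ≠ x + 1 := by omega
      simp [swapSites, hzx, hzx1]
    have hz2 : f (swapSites η (x + 1) x) = f η := by
      rw [swapSites_comm]; exact hz1
    rw [hz1, hz2, sub_self]
    ring
  -- step 2: locality of the finite sum on the window F
  have hloc_sum : ∀ η η', (∀ z ∈ F, η z = η' z) →
      (∑ x ∈ Finset.Icc aL bR, (constraintC m x η * (1 / 2 + b / (2 * (n:ℝ) ^ γ)) * occ η x * (1 - occ η (x + 1))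
        * (f (swapSites η x (x + 1)) - f η)
      + constraintC m x η * (1 / 2 - b / (2 * (n:ℝ) ^ γ)) * occ η (x + 1) * (1 - occ η x)
        * (f (swapSites η (x + 1) x) - f η)))
        = ∑ x ∈ Finset.Icc aL bR, (constraintC m x η' * (1 / 2 + b / (2 * (n:ℝ) ^ γ)) * occ η' x * (1 - occ η' (x + 1))
        * (f (swapSites η' x (x + 1)) - f η')
      + constraintC m x η' * (1 / 2 - b / (2 * (n:ℝ) ^ γ)) * occ η' (x + 1) * (1 - occ η' x)
        * (f (swapSites η' (x + 1) x) - f η')) := by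
    intro η η' hag
    apply Finset.sum_congr rfl
    intro x hx
    rw [Finset.mem_Icc] at hx
    have hagF : ∀ z : ℤ, aL - m ≤ z → z ≤ bR + 2 * m → η z = η' z := by
      intro z h1 h2
      exact hag z (by rw [hFdef, Finset.mem_Icc]; omega)
    have hcon : constraintC m x η = constraintC m x η' := by
      apply constraintC_local
      intro z hz
      rw [Finset.mem_Icc] at hz
      exact hagF z (by omega) (by omega)
    have hox : occ η x = occ η' x := by
      rw [occ, occ, hagF x (by omega) (by omega)]
    have hox1 : occ η (x + 1) = occ η' (x + 1) := by
      rw [occ, occ, hagF (x + 1) (by omega) (by omega)]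
    have hfe : f η = f η' := by
      apply hS'
      intro z hz
      have hb' := hSmem z hz
      exact hagF z (by omega) (by omega)
    have hfs : f (swapSites η x (x + 1)) = f (swapSites η' x (x + 1)) := by
      apply hS'
      intro z hz
      have hb' := hSmem z hz
      unfold swapSites
      by_cases h1 : z = x
      · simp only [if_pos h1]
        exact hagF (x + 1) (by omega) (by omega)
      · by_cases h2 : z = x + 1
        · simp only [if_neg h1, if_pos h2]
          exact hagF x (by omega) (by omega)
        · simp only [if_neg h1, if_neg h2]
          exact hagF z (by omega) (by omega)
    have hfs2 : f (swapSites η (x + 1) x) = f (swapSites η' (x + 1) x) := by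
      rw [swapSites_comm η (x + 1) x, swapSites_comm η' (x + 1) x]
      exact hfs
    rw [hcon, hox, hox1, hfe, hfs, hfs2]
  -- step 3: boundary evaluation of psi
  have psi_const : ∀ y : ℤ, ∀ k : ℕ, 1 ≤ k → k ≤ m →
      (∀ w ∈ Rset m y k, w ∈ F ∧ w ∉ S') → psi ρ F m f y k = ρ ^ m * EE ρ F f := by
    intro y k hk1 hk2 hw
    have hEE := EE_sites ρ F (Rset m y k) (fun w hw' => (hw w hw').1) f
      (fun η η' hag => hS' η η' (fun z hz => hag z (fun hzR => (hw z hzR).2 hz)))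
    rw [Rset_card m y k hk1 hk2] at hEE
    simpa [psi, siteProd] using hEE
  have hb1 : ∀ k ∈ Finset.Icc 2 m, psi ρ F m f (aL - 1) k = ρ ^ m * EE ρ F f := by
    intro k hk
    rw [Finset.mem_Icc] at hk
    have hkZ : (2:ℤ) ≤ (k:ℤ) ∧ (k:ℤ) ≤ (m:ℤ) := by exact_mod_cast hk
    apply psi_const _ _ (by omega) hk.2
    intro w hwR
    have hww := Rset_subset m (aL - 1) k (by omega) hk.2 hwR
    rw [Finset.mem_Icc] at hww
    constructor
    · rw [hFdef, Finset.mem_Icc]; omega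
    · intro hzS
      have := hSmem w hzS
      omega
  have hb2 : ∀ k ∈ Finset.Icc 2 m, psi ρ F m f bR k = ρ ^ m * EE ρ F f := by
    intro k hk
    rw [Finset.mem_Icc] at hk
    have hkZ : (2:ℤ) ≤ (k:ℤ) ∧ (k:ℤ) ≤ (m:ℤ) := by exact_mod_cast hk
    apply psi_const _ _ (by omega) hk.2
    intro w hwR
    have hww := Rset_subset m bR k (by omega) hk.2 hwR
    rw [Finset.mem_Icc] at hww
    have hlow : bR + k - m ≤ w := by
      simp only [Rset, Finset.mem_union, Finset.mem_Icc] at hwR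
      omega
    constructor
    · rw [hFdef, Finset.mem_Icc]; omega
    · intro hzS
      have := hSmem w hzS
      omega
  have hb3 : ∀ y ∈ Finset.Icc (bR + 1) (bR + (m:ℤ)), psi ρ F m f y 1 = ρ ^ m * EE ρ F f := by
    intro y hy
    rw [Finset.mem_Icc] at hy
    apply psi_const _ _ le_rfl hm1
    intro w hwR
    have hww := Rset_subset_one m hm1 y hwR
    rw [Finset.mem_Icc] at hww
    constructor
    · rw [hFdef, Finset.mem_Icc]; omega
    · intro hzS
      have := hSmem w hzS
      omega
  have hb4 : ∀ y ∈ Finset.Icc aL (aL + (m:ℤ) - 1), psi ρ F m f y 1 = ρ ^ m * EE ρ F f := by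
    intro y hy
    rw [Finset.mem_Icc] at hy
    apply psi_const _ _ le_rfl hm1
    intro w hwR
    have hww := Rset_subset_one m hm1 y hwR
    rw [Finset.mem_Icc] at hww
    constructor
    · rw [hFdef, Finset.mem_Icc]; omega
    · intro hzS
      have := hSmem w hzS
      omega
  have htel := telescope m hm aL bR (by omega) (psi ρ F m f) (ρ ^ m * EE ρ F f) hb1 hb2 hb3 hb4
  -- main chain
  calc ∫ η, generator m b γ n f η ∂μ
      = ∫ η, (∑ x ∈ Finset.Icc aL bR, (constraintC m x η * (1 / 2 + b / (2 * (n:ℝ) ^ γ)) * occ η x * (1 - occ η (x + 1))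
        * (f (swapSites η x (x + 1)) - f η)
      + constraintC m x η * (1 / 2 - b / (2 * (n:ℝ) ^ γ)) * occ η (x + 1) * (1 - occ η x)
        * (f (swapSites η (x + 1) x) - f η))) ∂μ := by
        congr 1
        funext η
        exact hgen η
    _ = EE ρ F (fun η => ∑ x ∈ Finset.Icc aL bR, (constraintC m x η * (1 / 2 + b / (2 * (n:ℝ) ^ γ)) * occ η x * (1 - occ η (x + 1))
        * (f (swapSites η x (x + 1)) - f η)
      + constraintC m x η * (1 / 2 - b / (2 * (n:ℝ) ^ γ)) * occ η (x + 1) * (1 - occ η x)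
        * (f (swapSites η (x + 1) x) - f η))) :=
        integral_eq_EE hρ0 hρ1 μ hiid F _ hloc_sum
    _ = ∑ x ∈ Finset.Icc aL bR, EE ρ F (fun η => (constraintC m x η * (1 / 2 + b / (2 * (n:ℝ) ^ γ)) * occ η x * (1 - occ η (x + 1))
        * (f (swapSites η x (x + 1)) - f η)
      + constraintC m x η * (1 / 2 - b / (2 * (n:ℝ) ^ γ)) * occ η (x + 1) * (1 - occ η x)
        * (f (swapSites η (x + 1) x) - f η))) :=
        EE_sum ρ F (Finset.Icc aL bR) _
    _ = ∑ x ∈ Finset.Icc aL bR, (1 / 2 + b / (2 * (n:ℝ) ^ γ) - (1 / 2 - b / (2 * (n:ℝ) ^ γ)))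
          * ((∑ k ∈ Finset.Icc 2 m, psi ρ F m f (x - 1) k + psi ρ F m f (x + m) 1)
            - (∑ k ∈ Finset.Icc 2 m, psi ρ F m f x k + psi ρ F m f x 1)) := by
        apply Finset.sum_congr rfl
        intro x hx
        have hxmem := hx
        rw [Finset.mem_Icc] at hxmem
        have hxF : x ∈ F := by rw [hFdef, Finset.mem_Icc]; omega
        have hx1F : x + 1 ∈ F := by rw [hFdef, Finset.mem_Icc]; omega
        rw [EE_term ρ F m hm1 (1 / 2 + b / (2 * (n:ℝ) ^ γ)) (1 / 2 - b / (2 * (n:ℝ) ^ γ))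
          f x hxF hx1F]
        have hQ : (∑ k ∈ Finset.Icc 1 m, EE ρ F (fun η => siteProd (Qset m x k) η * f η))
            = ∑ k ∈ Finset.Icc 2 m, psi ρ F m f (x - 1) k + psi ρ F m f (x + m) 1 := by
          have hins : Finset.Icc 1 m = insert m (Finset.Icc 1 (m - 1)) := by
            ext w; simp only [Finset.mem_insert, Finset.mem_Icc]; omega
          have hnm : m ∉ Finset.Icc 1 (m - 1) := by
            simp only [Finset.mem_Icc]; omega
          rw [hins, Finset.sum_insert hnm]
          have htop : EE ρ F (fun η => siteProd (Qset m x m) η * f η)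
              = psi ρ F m f (x + m) 1 := by
            rw [Qset_top m hm1 x]
            rfl
          have hrest : (∑ k ∈ Finset.Icc 1 (m - 1), EE ρ F (fun η => siteProd (Qset m x k) η * f η))
              = ∑ k ∈ Finset.Icc 2 m, psi ρ F m f (x - 1) k := by
            have hmap : (Finset.Icc 1 (m - 1)).map (addRightEmbedding 1) = Finset.Icc 2 m := by
              rw [Finset.map_add_right_Icc]
              congr 1 <;> omega
            rw [← hmap, Finset.sum_map]
            apply Finset.sum_congr rfl
            intro k hk
            rw [Finset.mem_Icc] at hk
            rw [Qset_eq_Rset m x k hk.1 (by omega)]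
            have : (addRightEmbedding 1) k = k + 1 := rfl
            rw [this]
            rfl
          rw [htop, hrest]
          ring
        have hR : (∑ k ∈ Finset.Icc 1 m, EE ρ F (fun η => siteProd (Rset m x k) η * f η))
            = ∑ k ∈ Finset.Icc 2 m, psi ρ F m f x k + psi ρ F m f x 1 := by
          have hins : Finset.Icc 1 m = insert 1 (Finset.Icc 2 m) := by
            ext w; simp only [Finset.mem_insert, Finset.mem_Icc]; omega
          have hn1 : 1 ∉ Finset.Icc 2 m := by
            simp only [Finset.mem_Icc]; omega
          rw [hins, Finset.sum_insert hn1]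
          have : ∀ k, EE ρ F (fun η => siteProd (Rset m x k) η * f η) = psi ρ F m f x k :=
            fun k => rfl
          rw [this 1]
          rw [Finset.sum_congr rfl (fun k _ => this k)]
          ring
        rw [hQ, hR]
    _ = (1 / 2 + b / (2 * (n:ℝ) ^ γ) - (1 / 2 - b / (2 * (n:ℝ) ^ γ)))
          * ∑ x ∈ Finset.Icc aL bR,
          ((∑ k ∈ Finset.Icc 2 m, psi ρ F m f (x - 1) k + psi ρ F m f (x + m) 1)
            - (∑ k ∈ Finset.Icc 2 m, psi ρ F m f x k + psi ρ F m f x 1)) := by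
        rw [Finset.mul_sum]
    _ = 0 := by
        rw [htel, mul_zero]
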